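/- Let E be a real normed vector space and let v : E → ℝ be of class C² (ContDiff ℝ 2 v). Define the circle-valued lift u : E → ℝ² by u(x) = (cos(v(x)), sin(v(x))). Then for every x ∈ E, ‖iteratedFDeriv ℝ 2 u x‖ ≥ ‖fderiv ℝ v x‖², where the left-hand side is the norm of the second iterated Fréchet derivative as a continuous bilinear map and the right-hand side is the square of the operator norm of the derivative of v. -/

import Mathlib

/-- The circle-valued lift `u(x) = (cos (v x), sin (v x)) ∈ ℝ²` of `v : E → ℝ`,
where `ℝ² = EuclideanSpace ℝ (Fin 2)`. -/
noncomputable def circleLift {E : Type*} (v : E → ℝ) (x : E) : EuclideanSpace ℝ (Fin 2) :=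
  (WithLp.equiv 2 (Fin 2 → ℝ)).symm ![Real.cos (v x), Real.sin (v x)]

/-- Second derivative of `g ∘ v` for `v : E → ℝ` of class `C²` and `g : ℝ → ℝ` twice
differentiable, evaluated on the diagonal. -/
lemma second_fderiv_comp {E : Type*} [NormedAddCommGroup E] [NormedSpace ℝ E]
    (v : E → ℝ) (hv : ContDiff ℝ 2 v) (x h : E)
    (g g' g'' : ℝ → ℝ)
    (hg : ∀ t, HasDerivAt g (g' t) t) (hg' : ∀ t, HasDerivAt g' (g'' t) t) :
    fderiv ℝ (fderiv ℝ (fun y => g (v y))) x h h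
      = g'' (v x) * (fderiv ℝ v x h) ^ 2 + g' (v x) * fderiv ℝ (fderiv ℝ v) x h h := by
  have hvd : Differentiable ℝ v := hv.differentiable (by norm_num)
  have h1 : fderiv ℝ (fun y => g (v y)) = fun y => g' (v y) • fderiv ℝ v y := by
    funext y
    exact ((hg (v y)).comp_hasFDerivAt y (hvd y).hasFDerivAt).fderiv
  rw [h1]
  have hDv : DifferentiableAt ℝ (fderiv ℝ v) x :=
    ((hv.fderiv_right (m := 1) (by norm_num)).differentiable (by norm_num)) x
  have hc : HasFDerivAt (fun y => g' (v y)) (g'' (v x) • fderiv ℝ v x) x :=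
    (hg' (v x)).comp_hasFDerivAt x (hvd x).hasFDerivAt
  rw [show (fun y => g' (v y) • fderiv ℝ v y) = (fun y => g' (v y)) • fderiv ℝ v from rfl,
    (hc.smul hDv.hasFDerivAt).fderiv]
  simp [ContinuousLinearMap.add_apply, ContinuousLinearMap.smul_apply,
    ContinuousLinearMap.smulRight_apply]
  ring

/-- If `v : E → ℝ` is `C²` and `u = (cos ∘ v, sin ∘ v)` is its circle-valued lift,
then the full second derivative of `u` controls the square of the first derivative
of `v`: `‖D²u(x)‖ ≥ ‖Dv(x)‖²`. -/
theorem circleLift_iteratedFDeriv_two_ge {E : Type*} [NormedAddCommGroup E] [NormedSpace ℝ E]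
    (v : E → ℝ) (hv : ContDiff ℝ 2 v) (x : E) :
    ‖iteratedFDeriv ℝ 2 (circleLift v) x‖ ≥ ‖fderiv ℝ v x‖ ^ 2 := by
  set T := iteratedFDeriv ℝ 2 (circleLift v) x with hTdef
  have hu : ContDiff ℝ 2 (circleLift v) := by
    rw [contDiff_euclidean]
    intro i
    fin_cases i
    · exact (Real.contDiff_cos).comp hv
    · exact (Real.contDiff_sin).comp hv
  have key : ∀ h : E, (fderiv ℝ v x h) ^ 2 ≤ ‖T‖ * (‖h‖ * ‖h‖) := by
    intro h
    set p := fderiv ℝ v x h with hp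
    set q := fderiv ℝ (fderiv ℝ v) x h h with hq
    have hproj : ∀ i : Fin 2, T ![h, h] i
        = iteratedFDeriv ℝ 2 (fun y => circleLift v y i) x ![h, h] := by
      intro i
      have := (EuclideanSpace.proj (𝕜 := ℝ) i).iteratedFDeriv_comp_left (hu.contDiffAt (x := x)) (le_refl 2)
      have h2 := congrFun (congrArg DFunLike.coe this) ![h, h]
      simpa [Function.comp_def, hTdef] using h2.symm
    have h0 : T ![h, h] 0 = -Real.cos (v x) * p ^ 2 + -Real.sin (v x) * q := by
      rw [hproj 0]
      have : (fun y => circleLift v y 0) = fun y => Real.cos (v y) := rfl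
      rw [this, iteratedFDeriv_two_apply]
      have := second_fderiv_comp v hv x h Real.cos (fun t => -Real.sin t)
        (fun t => -Real.cos t) (fun t => Real.hasDerivAt_cos t)
        (fun t => (Real.hasDerivAt_sin t).neg)
      simp only [Matrix.cons_val_zero, Matrix.cons_val_one, Matrix.head_cons]
      rw [this]
    have h1 : T ![h, h] 1 = -Real.sin (v x) * p ^ 2 + Real.cos (v x) * q := by
      rw [hproj 1]
      have : (fun y => circleLift v y 1) = fun y => Real.sin (v y) := rfl
      rw [this, iteratedFDeriv_two_apply]
      have := second_fderiv_comp v hv x h Real.sin (fun t => Real.cos t)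
        (fun t => -Real.sin t) (fun t => Real.hasDerivAt_sin t)
        (fun t => (Real.hasDerivAt_cos t))
      simp only [Matrix.cons_val_zero, Matrix.cons_val_one, Matrix.head_cons]
      rw [this]
    have hnormsq : ‖T ![h, h]‖ ^ 2 = (p ^ 2) ^ 2 + q ^ 2 := by
      rw [EuclideanSpace.norm_eq, Real.sq_sqrt (by positivity)]
      rw [Fin.sum_univ_two, h0, h1]
      have := Real.sin_sq_add_cos_sq (v x)
      simp only [Real.norm_eq_abs, sq_abs]
      nlinarith [this]
    have hle : p ^ 2 ≤ ‖T ![h, h]‖ := by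
      nlinarith [norm_nonneg (T ![h, h]), sq_nonneg q]
    calc p ^ 2 ≤ ‖T ![h, h]‖ := hle
      _ ≤ ‖T‖ * ∏ i, ‖![h, h] i‖ := T.le_opNorm ![h, h]
      _ = ‖T‖ * (‖h‖ * ‖h‖) := by
          rw [Fin.prod_univ_two]
          simp
  have hTn : (0:ℝ) ≤ ‖T‖ := norm_nonneg T
  have hb : ‖fderiv ℝ v x‖ ≤ Real.sqrt ‖T‖ := by
    apply ContinuousLinearMap.opNorm_le_bound _ (Real.sqrt_nonneg _)
    intro h
    have := key h
    rw [Real.norm_eq_abs]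
    nlinarith [abs_nonneg (fderiv ℝ v x h), norm_nonneg h, Real.sqrt_nonneg ‖T‖,
      Real.sq_sqrt hTn, sq_abs (fderiv ℝ v x h),
      mul_nonneg (Real.sqrt_nonneg ‖T‖) (norm_nonneg h)]
  have hsq := Real.sq_sqrt hTn
  nlinarith [norm_nonneg (fderiv ℝ v x), Real.sqrt_nonneg ‖T‖]
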